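/- Fix integers k, h with 1 ≤ h < k. Assume there exists ρ > 0 with lim_{n→∞} p(k−h,n,⌊ρn⌋) = 1 and there exists ρ' > 0 with lim_{n→∞} p(k−h,n,⌊ρ'n⌋) = 0. Then there exist reals s > 0 and r > 0 such that lim_{E→∞} q^gctd(h,k−h,⌊s·E^{1/h}⌋,E) = 1 and lim_{E→∞} q^gctd(h,k−h,⌊r·E^{1/h}⌋,E) = 0. -/

import Mathlib

open Filter

/-- A `k`-clause over `n` propositional variables: a set of `k` literals
(pairs of a variable and a sign) over `k` distinct variables. -/
def Clause (n k : ℕ) : Type :=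
  {C : Finset (Fin n × Bool) // C.card = k ∧ (C.image Prod.fst).card = k}

/-- An assignment `σ` satisfies a clause if it agrees with the clause's sign
on at least one variable of the clause. -/
def ClauseSat {n k : ℕ} (σ : Fin n → Bool) (C : Clause n k) : Prop :=
  ∃ l ∈ C.val, σ l.1 = l.2

/-- A `k`-CNF formula with `m` clauses (an `m`-tuple of `k`-clauses) is
satisfiable if some assignment satisfies all of its clauses. -/
def CNFSat {n k m : ℕ} (F : Fin m → Clause n k) : Prop :=
  ∃ σ : Fin n → Bool, ∀ i, ClauseSat σ (F i)

/-- `pSat k n m` is the fraction of the `m`-tuples of `k`-clauses over an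
`n`-element variable set that are satisfiable. -/
noncomputable def pSat (k n m : ℕ) : ℝ :=
  (Nat.card {F : Fin m → Clause n k // CNFSat F} : ℝ) /
    (Nat.card (Fin m → Clause n k) : ℝ)

/-- A set of `h` literals over `h` distinct variables among `A` universal
variables. There are `2^h·binom(A,h)` such sets. -/
def HLitSet (A h : ℕ) : Type :=
  {L : Finset (Fin A × Bool) // L.card = h ∧ (L.image Prod.fst).card = h}

/-- A generalized controlled instance over `A` universal and `E` existential
variables: a function assigning to each `h`-literal set `L` over the universal
variables a `c`-clause `g(L)` over the existential variables. (For `k`-clauses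
in the matrix, take `c = k - h`.) Its matrix consists of the clauses
`(⋁L) ∨ g(L)`. -/
def GCtdInst (A E h c : ℕ) : Type := HLitSet A h → Clause E c

/-- The QBF `∀X∃Y` of the matrix of a generalized controlled instance `g` is
true: for every assignment `I` of the universal variables there is an
assignment `J` of the existential variables satisfying at least one literal of
every clause `(⋁L) ∨ g(L)` of the matrix. -/
def GCtdTrue {A E h c : ℕ} (g : GCtdInst A E h c) : Prop :=
  ∀ I : Fin A → Bool, ∃ J : Fin E → Bool, ∀ L : HLitSet A h,
    (∃ l ∈ L.val, I l.1 = l.2) ∨ ∃ p ∈ (g L).val, J p.1 = p.2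

/-- `q^gctd(h,c,A,E)`: the fraction of generalized controlled instances `g`
for which the QBF `∀X∃Y` of the matrix of `g` is true. -/
noncomputable def qGCtd (h c A E : ℕ) : ℝ :=
  (Nat.card {g : GCtdInst A E h c // GCtdTrue g} : ℝ) /
    (Nat.card (GCtdInst A E h c) : ℝ)

-- === infrastructure ===

instance instFintypeClause (n k : ℕ) : Fintype (Clause n k) := by
  unfold Clause; infer_instance

instance instFintypeHLitSet (A h : ℕ) : Fintype (HLitSet A h) := by
  unfold HLitSet; infer_instance

instance instFiniteGCtdInst (A E h c : ℕ) : Finite (GCtdInst A E h c) := by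
  unfold GCtdInst; exact Pi.finite

def GenSat {n k : ℕ} {ι : Type} (F : ι → Clause n k) : Prop :=
  ∃ σ : Fin n → Bool, ∀ i, ClauseSat σ (F i)

lemma card_genSat_congr {n k : ℕ} {ι κ : Type} [Finite κ] (e : ι ≃ κ) :
    Nat.card {F : ι → Clause n k // GenSat F} =
      Nat.card {F : κ → Clause n k // GenSat F} := by
  apply Nat.card_congr
  refine Equiv.subtypeEquiv (Equiv.arrowCongr e (Equiv.refl _)) (fun F => ?_)
  constructor
  · rintro ⟨σ, hσ⟩
    exact ⟨σ, fun j => by simpa [Equiv.arrowCongr] using hσ (e.symm j)⟩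
  · rintro ⟨σ, hσ⟩
    refine ⟨σ, fun i => ?_⟩
    have := hσ (e i)
    simpa [Equiv.arrowCongr] using this

lemma pSat_eq_gen {k n m : ℕ} {ι : Type} [Finite ι] (e : ι ≃ Fin m) :
    pSat k n m = (Nat.card {F : ι → Clause n k // GenSat F} : ℝ) /
      (Nat.card (ι → Clause n k) : ℝ) := by
  unfold pSat
  have h1 : Nat.card {F : Fin m → Clause n k // CNFSat F}
      = Nat.card {F : ι → Clause n k // GenSat F} := by
    have : Nat.card {F : Fin m → Clause n k // CNFSat F}
        = Nat.card {F : Fin m → Clause n k // GenSat F} := rfl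
    rw [this, card_genSat_congr e]
  have h2 : Nat.card (Fin m → Clause n k) = Nat.card (ι → Clause n k) :=
    Nat.card_congr (Equiv.arrowCongr e (Equiv.refl _)).symm
  rw [h1, h2]

lemma div_count {a b a' b' t : ℕ} (h1 : a' ≤ a * t) (h2 : b' = b * t) :
    (a' : ℝ) / (b' : ℝ) ≤ (a : ℝ) / (b : ℝ) := by
  subst h2
  rcases Nat.eq_zero_or_pos b with hb | hb
  · simp [hb]
  rcases Nat.eq_zero_or_pos t with ht | ht
  · subst ht
    simp at h1
    simp [h1]
    positivity
  · have hbt : (0:ℝ) < ((b*t : ℕ) : ℝ) := by positivity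
    have hbr : (0:ℝ) < (b : ℝ) := by positivity
    rw [div_le_div_iff₀ hbt hbr]
    have h1' : (a' : ℝ) ≤ (a : ℝ) * (t : ℝ) := by exact_mod_cast h1
    push_cast
    nlinarith [Nat.cast_nonneg (α := ℝ) a, Nat.cast_nonneg (α := ℝ) b]

lemma pSat_anti (k n : ℕ) {m m' : ℕ} (hm : m ≤ m') : pSat k n m' ≤ pSat k n m := by
  classical
  have e : Fin m ⊕ Fin (m' - m) ≃ Fin m' := finSumFinEquiv.trans (finCongr (by omega))
  have hinj : Function.Injective (fun F : {F : Fin m' → Clause n k // CNFSat F} =>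
      ((⟨fun i => F.val (e (Sum.inl i)), by
          obtain ⟨σ, hσ⟩ := F.prop; exact ⟨σ, fun i => hσ _⟩⟩ :
        {F : Fin m → Clause n k // CNFSat F}),
       fun j : Fin (m' - m) => F.val (e (Sum.inr j)))) := by
    rintro ⟨F, hF⟩ ⟨G, hG⟩ hFG
    simp only [Prod.mk.injEq, Subtype.mk.injEq] at hFG ⊢
    funext x
    obtain ⟨y, rfl⟩ := e.surjective x
    cases y with
    | inl i => exact congrFun hFG.1 i
    | inr j => exact congrFun hFG.2 j
  have hcard := Nat.card_le_card_of_injective _ hinj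
  rw [Nat.card_prod] at hcard
  unfold pSat
  apply div_count hcard
  rw [Nat.card_fun, Nat.card_fun, Nat.card_fun, ← pow_add]
  congr 1
  simp
  omega

-- === all-true literal sets ===

def litEmb (A : ℕ) : Fin A ↪ Fin A × Bool :=
  ⟨fun v => (v, true), fun a b hab => by simpa using congrArg Prod.fst hab⟩

lemma allTrue_fst_aux {A u : ℕ} (S : {S : Finset (Fin A) // S.card = u}) :
    ((S.val.map (litEmb A)).image Prod.fst) = S.val := by
  ext v
  simp [litEmb, Finset.mem_map]
  exact ⟨fun ⟨a, ha, h⟩ => by subst h; exact ha, fun h => ⟨v, h, rfl⟩⟩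

def allTrue {A u : ℕ} (S : {S : Finset (Fin A) // S.card = u}) : HLitSet A u :=
  ⟨S.val.map (litEmb A), by
    refine ⟨by simp [S.prop], ?_⟩
    rw [allTrue_fst_aux S, S.prop]⟩

lemma allTrue_sign {A u : ℕ} (S : {S : Finset (Fin A) // S.card = u}) :
    ∀ l ∈ (allTrue S).val, l.2 = true := by
  intro l hl
  simp only [allTrue, Finset.mem_map, litEmb, Function.Embedding.coeFn_mk] at hl
  obtain ⟨v, _, rfl⟩ := hl
  rfl

lemma allTrue_inj {A u : ℕ} : Function.Injective (allTrue (A := A) (u := u)) := by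
  intro S S' hSS
  apply Subtype.ext
  rw [← allTrue_fst_aux S, ← allTrue_fst_aux S']
  exact congrArg (fun L : HLitSet A u => L.val.image Prod.fst) hSS

-- === qGCtd vs pSat ===

lemma pSat_le_qGCtd (u c A E : ℕ) :
    pSat c E (Nat.card (HLitSet A u)) ≤ qGCtd u c A E := by
  classical
  have e : HLitSet A u ≃ Fin (Nat.card (HLitSet A u)) := Finite.equivFin _
  rw [pSat_eq_gen e]
  unfold qGCtd
  have hnum : Nat.card {F : HLitSet A u → Clause E c // GenSat F} ≤
      Nat.card {g : GCtdInst A E u c // GCtdTrue g} := by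
    refine Nat.card_le_card_of_injective
      (fun F => (⟨F.val, fun I => by
        obtain ⟨J, hJ⟩ := F.prop
        exact ⟨J, fun L => Or.inr (hJ L)⟩⟩ : {g : GCtdInst A E u c // GCtdTrue g})) ?_
    rintro ⟨F, _⟩ ⟨G, _⟩ hFG
    have := congrArg Subtype.val hFG
    exact Subtype.ext this
  have hden : Nat.card (HLitSet A u → Clause E c) = Nat.card (GCtdInst A E u c) * 1 :=
    (mul_one _).symm
  exact div_count (by omega) hden

lemma qGCtd_le_pSat (u c A E : ℕ) : qGCtd u c A E ≤ pSat c E (A.choose u) := by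
  classical
  have eST : {S : Finset (Fin A) // S.card = u} ≃ Fin (A.choose u) :=
    Fintype.equivFinOfCardEq (by rw [Fintype.card_finset_len, Fintype.card_fin])
  let Ψ : {g : GCtdInst A E u c // GCtdTrue g} →
      {F : {S : Finset (Fin A) // S.card = u} → Clause E c // GenSat F} ×
        ({L : HLitSet A u // L ∉ Set.range (allTrue (A := A) (u := u))} → Clause E c) :=
    fun g => (⟨fun S => g.val (allTrue S), by
        obtain ⟨J, hJ⟩ := g.prop (fun _ => false)
        refine ⟨J, fun S => ?_⟩
        rcases hJ (allTrue S) with h1 | h2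
        · obtain ⟨l, hl, hl2⟩ := h1
          have := allTrue_sign S l hl
          simp [this] at hl2
        · exact h2⟩,
      fun L => g.val L.val)
  have hΨ : Function.Injective Ψ := by
    rintro ⟨g, hg⟩ ⟨g', hg'⟩ hgg
    simp only [Ψ, Prod.mk.injEq, Subtype.mk.injEq] at hgg ⊢
    funext L
    by_cases hL : L ∈ Set.range (allTrue (A := A) (u := u))
    · obtain ⟨S, rfl⟩ := hL
      exact congrFun hgg.1 S
    · exact congrFun hgg.2 ⟨L, hL⟩
  have hcard := Nat.card_le_card_of_injective _ hΨ
  rw [Nat.card_prod] at hcard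
  have hsplit : Nat.card (HLitSet A u) =
      Nat.card {S : Finset (Fin A) // S.card = u} +
        Nat.card {L : HLitSet A u // L ∉ Set.range (allTrue (A := A) (u := u))} := by
    have e1 : {L : HLitSet A u // L ∈ Set.range (allTrue (A := A) (u := u))} ⊕
        {L : HLitSet A u // L ∉ Set.range (allTrue (A := A) (u := u))} ≃ HLitSet A u :=
      Equiv.sumCompl _
    have e2 : {S : Finset (Fin A) // S.card = u} ≃
        {L : HLitSet A u // L ∈ Set.range (allTrue (A := A) (u := u))} :=
      Equiv.ofInjective _ allTrue_inj
    rw [← Nat.card_congr e1, Nat.card_sum, Nat.card_congr e2]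
  rw [pSat_eq_gen eST]
  unfold qGCtd
  apply div_count hcard
  show Nat.card (HLitSet A u → Clause E c) = _
  rw [Nat.card_fun, Nat.card_fun, Nat.card_fun, ← pow_add, hsplit]

lemma card_HLitSet_le (A u : ℕ) : Nat.card (HLitSet A u) ≤ (2 * A) ^ u := by
  have h1 : Nat.card (HLitSet A u) ≤ Nat.card {C : Finset (Fin A × Bool) // C.card = u} :=
    Nat.card_le_card_of_injective (fun L => ⟨L.val, L.prop.1⟩)
      (fun L L' hLL => Subtype.ext (by simpa using hLL))
  have h2 : Nat.card {C : Finset (Fin A × Bool) // C.card = u} = (A * 2).choose u := by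
    rw [Nat.card_eq_fintype_card, Fintype.card_finset_len, Fintype.card_prod,
      Fintype.card_fin, Fintype.card_bool]
  calc Nat.card (HLitSet A u) ≤ (A * 2).choose u := h2 ▸ h1
    _ ≤ (A * 2) ^ u := Nat.choose_le_pow _ _
    _ = (2 * A) ^ u := by rw [mul_comm]

lemma qGCtd_nonneg (u c A E : ℕ) : 0 ≤ qGCtd u c A E := by
  unfold qGCtd; positivity

lemma qGCtd_le_one (u c A E : ℕ) : qGCtd u c A E ≤ 1 := by
  unfold qGCtd
  apply div_le_one_of_le₀
  · exact_mod_cast Nat.card_le_card_of_injective Subtype.val Subtype.val_injective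
  · positivity

lemma rpow_pow_cancel {x : ℝ} (hx : 0 ≤ x) {u : ℕ} (hu : u ≠ 0) :
    (x ^ ((1:ℝ)/(u:ℝ))) ^ u = x := by
  have hu' : (u:ℝ) ≠ 0 := Nat.cast_ne_zero.mpr hu
  rw [← Real.rpow_natCast (x ^ ((1:ℝ)/(u:ℝ))) u, ← Real.rpow_mul hx]
  rw [one_div, inv_mul_cancel₀ hu', Real.rpow_one]


/-- fix `1 ≤ h < k`; if there is `ρ > 0` with
`lim_{n→∞} p(k−h,n,⌊ρn⌋) = 1` and there is `ρ' > 0` with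
`lim_{n→∞} p(k−h,n,⌊ρ'n⌋) = 0`, then there are reals `s > 0` and `r > 0` with
`lim_{E→∞} q^gctd(h,k−h,⌊s·E^{1/h}⌋,E) = 1` and
`lim_{E→∞} q^gctd(h,k−h,⌊r·E^{1/h}⌋,E) = 0`. -/
theorem stmt_12 (k h : ℕ) (hh : 1 ≤ h) (hhk : h < k)
    (hyp1 : ∃ ρ : ℝ, 0 < ρ ∧
      Tendsto (fun n : ℕ => pSat (k - h) n ⌊ρ * (n : ℝ)⌋₊) atTop (nhds 1))
    (hyp0 : ∃ ρ' : ℝ, 0 < ρ' ∧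
      Tendsto (fun n : ℕ => pSat (k - h) n ⌊ρ' * (n : ℝ)⌋₊) atTop (nhds 0)) :
    (∃ s : ℝ, 0 < s ∧
      Tendsto (fun E : ℕ =>
          qGCtd h (k - h) ⌊s * (E : ℝ) ^ ((1 : ℝ) / (h : ℝ))⌋₊ E)
        atTop (nhds 1)) ∧
    (∃ r : ℝ, 0 < r ∧
      Tendsto (fun E : ℕ =>
          qGCtd h (k - h) ⌊r * (E : ℝ) ^ ((1 : ℝ) / (h : ℝ))⌋₊ E)
        atTop (nhds 0)) := by
  have hu : h ≠ 0 := by omega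
  constructor
  · obtain ⟨ρ, hρ, hlim1⟩ := hyp1
    have hbase : (0:ℝ) < ρ / 2 ^ h := by positivity
    refine ⟨(ρ / 2 ^ h) ^ ((1:ℝ)/(h:ℝ)), Real.rpow_pos_of_pos hbase _, ?_⟩
    set s := (ρ / 2 ^ h) ^ ((1:ℝ)/(h:ℝ)) with hs
    have hspos : 0 < s := Real.rpow_pos_of_pos hbase _
    have hsh : s ^ h = ρ / 2 ^ h := rpow_pow_cancel (le_of_lt hbase) hu
    refine tendsto_of_tendsto_of_tendsto_of_le_of_le hlim1 tendsto_const_nhds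
      (fun E => ?_) (fun E => qGCtd_le_one _ _ _ _)
    set A := ⌊s * (E : ℝ) ^ ((1 : ℝ) / (h : ℝ))⌋₊ with hA
    have hM : Nat.card (HLitSet A h) ≤ ⌊ρ * (E:ℝ)⌋₊ := by
      apply Nat.le_floor
      have h1 : (Nat.card (HLitSet A h) : ℝ) ≤ ((2 * A : ℕ) ^ h : ℕ) := by
        exact_mod_cast card_HLitSet_le A h
      have hEnn : (0:ℝ) ≤ (E:ℝ) ^ ((1:ℝ)/(h:ℝ)) := Real.rpow_nonneg (Nat.cast_nonneg E) _
      have hAle : (A:ℝ) ≤ s * (E:ℝ) ^ ((1:ℝ)/(h:ℝ)) := Nat.floor_le (by positivity)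
      have hEh : ((E:ℝ) ^ ((1:ℝ)/(h:ℝ))) ^ h = (E:ℝ) :=
        rpow_pow_cancel (Nat.cast_nonneg E) hu
      calc (Nat.card (HLitSet A h) : ℝ) ≤ ((2 * A : ℕ) ^ h : ℕ) := h1
        _ = (2 * (A:ℝ)) ^ h := by push_cast; ring
        _ ≤ (2 * (s * (E:ℝ) ^ ((1:ℝ)/(h:ℝ)))) ^ h := by
            apply pow_le_pow_left₀ (by positivity)
            nlinarith
        _ = 2 ^ h * s ^ h * ((E:ℝ) ^ ((1:ℝ)/(h:ℝ))) ^ h := by ring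
        _ = ρ * (E:ℝ) := by rw [hsh, hEh]; field_simp
    calc pSat (k - h) E ⌊ρ * (E:ℝ)⌋₊ ≤ pSat (k - h) E (Nat.card (HLitSet A h)) :=
          pSat_anti _ _ hM
      _ ≤ qGCtd h (k - h) A E := pSat_le_qGCtd _ _ _ _
  · obtain ⟨ρ', hρ', hlim0⟩ := hyp0
    set D : ℝ := (h.factorial : ℝ) * ρ' + 1 with hD
    have hD1 : (1:ℝ) ≤ D := by
      have : (0:ℝ) ≤ (h.factorial : ℝ) * ρ' := by positivity
      linarith
    have hDpos : (0:ℝ) < D := by linarith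
    clear_value D
    set r : ℝ := (h:ℝ) * D ^ ((1:ℝ)/(h:ℝ)) + (h:ℝ) + 1 with hr
    clear_value r
    have hDu : (1:ℝ) ≤ D ^ ((1:ℝ)/(h:ℝ)) := Real.one_le_rpow hD1 (by positivity)
    have hrpos : 0 < r := by
      have h1 : (0:ℝ) ≤ (h:ℝ) * D ^ ((1:ℝ)/(h:ℝ)) := by positivity
      have h2 : (0:ℝ) ≤ (h:ℝ) := Nat.cast_nonneg h
      rw [hr]; linarith
    refine ⟨r, hrpos, ?_⟩
    refine tendsto_of_tendsto_of_tendsto_of_le_of_le' tendsto_const_nhds hlim0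
      (Eventually.of_forall (fun E => qGCtd_nonneg _ _ _ _)) ?_
    filter_upwards [eventually_ge_atTop 1] with E hE
    set uu : ℝ := (E:ℝ) ^ ((1:ℝ)/(h:ℝ)) with huu
    have hE1 : (1:ℝ) ≤ (E:ℝ) := by exact_mod_cast hE
    have huu1 : (1:ℝ) ≤ uu := Real.one_le_rpow hE1 (by positivity)
    set A := ⌊r * uu⌋₊ with hA
    clear_value uu A
    have hAgt : r * uu - 1 < (A:ℝ) := by
      have h2 := Nat.lt_floor_add_one (r * uu)
      rw [hA]
      linarith
    have hcand : (h:ℝ) + D ^ ((1:ℝ)/(h:ℝ)) * uu < (A:ℝ) + 1 := by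
      have h1 : (1:ℝ) ≤ (h:ℝ) := by exact_mod_cast hh
      have hx0 : (0:ℝ) ≤ D ^ ((1:ℝ)/(h:ℝ)) * uu := by positivity
      have e0 : r * uu = (h:ℝ) * (D ^ ((1:ℝ)/(h:ℝ)) * uu) + (h:ℝ) * uu + uu := by
        rw [hr]; ring
      have e1 : (h:ℝ) ≤ (h:ℝ) * uu := by nlinarith
      have e2 : D ^ ((1:ℝ)/(h:ℝ)) * uu ≤ (h:ℝ) * (D ^ ((1:ℝ)/(h:ℝ)) * uu) := by nlinarith
      have e3 : r * uu < (A:ℝ) + 1 := by linarith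
      nlinarith [e0, e1, e2, e3, huu1]
    have hAh : h ≤ A := by
      have hx : D ^ ((1:ℝ)/(h:ℝ)) * uu ≥ 1 := by nlinarith
      have : (h:ℝ) ≤ (A:ℝ) := by linarith
      exact_mod_cast this
    have hsub : ((A + 1 - h : ℕ) : ℝ) = (A:ℝ) + 1 - (h:ℝ) := by
      have : h ≤ A + 1 := by omega
      push_cast [Nat.cast_sub this]
      ring
    have hpow : D * (E:ℝ) ≤ ((A + 1 - h : ℕ) : ℝ) ^ h := by
      have hbn : (0:ℝ) ≤ D ^ ((1:ℝ)/(h:ℝ)) * uu := by positivity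
      have hle : D ^ ((1:ℝ)/(h:ℝ)) * uu ≤ ((A + 1 - h : ℕ) : ℝ) := by
        rw [hsub]; linarith
      have h2 : (D ^ ((1:ℝ)/(h:ℝ)) * uu) ^ h ≤ ((A + 1 - h : ℕ) : ℝ) ^ h :=
        pow_le_pow_left₀ hbn hle h
      have h3 : (D ^ ((1:ℝ)/(h:ℝ)) * uu) ^ h = D * (E:ℝ) := by
        rw [mul_pow, rpow_pow_cancel (le_of_lt hDpos) hu, huu,
          rpow_pow_cancel (Nat.cast_nonneg E) hu]
      linarith [h3 ▸ h2]
    have hchoose : ρ' * (E:ℝ) ≤ (A.choose h : ℝ) := by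
      have hpc : (((A + 1 - h : ℕ)) ^ h : ℝ) / (h.factorial : ℝ) ≤ (A.choose h : ℝ) := by
        exact_mod_cast Nat.pow_le_choose h A (α := ℝ)
      have hfac : (0:ℝ) < (h.factorial : ℝ) := by exact_mod_cast h.factorial_pos
      rw [div_le_iff₀ hfac] at hpc
      have hEpos : (0:ℝ) ≤ (E:ℝ) := Nat.cast_nonneg E
      have : ((A + 1 - h : ℕ) : ℝ) ^ h = (((A + 1 - h : ℕ)) ^ h : ℝ) := by push_cast; ring
      nlinarith [hpow, hpc]
    have hfloor : ⌊ρ' * (E:ℝ)⌋₊ ≤ A.choose h := by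
      have h1 : (⌊ρ' * (E:ℝ)⌋₊ : ℝ) ≤ (A.choose h : ℝ) :=
        le_trans (Nat.floor_le (by positivity)) hchoose
      exact_mod_cast h1
    calc qGCtd h (k - h) A E ≤ pSat (k - h) E (A.choose h) := qGCtd_le_pSat _ _ _ _
      _ ≤ pSat (k - h) E ⌊ρ' * (E:ℝ)⌋₊ := pSat_anti _ _ hfloor
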